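/- Let J₁, J₂, J₃ be a measurable partition of an interval [a,b] ⊂ ℝ with dist(J₁, J₃) ≥ ε, and let μ be the measure e^{αt} dt on [a,b] for some real α. Then (m/(ε·log 2))·μ([a,b])·μ(J₂) ≥ μ(J₁)·μ(J₃), where m = (1/μ([a,b]))·∫_a^b |t - u| dμ(t) for any fixed u ∈ [a,b]. -/

import Mathlib

open MeasureTheory Real Set

open intervalIntegral



noncomputable def Dfun (t : ℝ) : ℝ :=
  2*t*(t*Real.log t) - (1+t^2)*Real.log ((1+t^2)/2) - Real.log 2 * (1-t)^2
noncomputable def D1 (t : ℝ) : ℝ :=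
  4*t*Real.log t - 2*t*Real.log ((1+t^2)/2) + 2*Real.log 2*(1-t)
noncomputable def D2 (t : ℝ) : ℝ :=
  4*Real.log t - 2*Real.log ((1+t^2)/2) - 2*Real.log 2 + 4 - 4*t^2/(1+t^2)
noncomputable def D3 (t : ℝ) : ℝ := 4/t - 4*t/(1+t^2) - 8*t/(1+t^2)^2

lemma one_add_sq_pos (t : ℝ) : (0:ℝ) < 1 + t^2 := by positivity

lemma hasDerivAt_logterm (t : ℝ) :
    HasDerivAt (fun x : ℝ => Real.log ((1+x^2)/2)) (2*t/(1+t^2)) t := by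
  have h1 : HasDerivAt (fun x : ℝ => (1+x^2)/2) (t) t := by
    have := ((hasDerivAt_pow 2 t).const_add 1).div_const 2
    simpa using this.congr_deriv (by first | ring | (simp only [id_eq]; ring))
  have h2 := h1.log (by positivity)
  convert h2 using 1
  field_simp

lemma hasDerivAt_Dfun {t : ℝ} (ht : 0 < t) : HasDerivAt Dfun (D1 t) t := by
  have hlog : HasDerivAt (fun x : ℝ => x * Real.log x) (Real.log t + 1) t :=
    Real.hasDerivAt_mul_log (ne_of_gt ht)
  have h1 : HasDerivAt (fun x : ℝ => 2*x*(x*Real.log x))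
      (2 * (t*Real.log t) + 2*t*(Real.log t + 1)) t := by
    have h := ((hasDerivAt_id t).const_mul (2:ℝ)).mul hlog
    simp only [id_eq] at h
    exact h.congr_deriv (by ring)
  have h2 : HasDerivAt (fun x : ℝ => (1+x^2)*Real.log ((1+x^2)/2))
      (2*t*Real.log ((1+t^2)/2) + (1+t^2)*(2*t/(1+t^2))) t := by
    have ha : HasDerivAt (fun x : ℝ => (1+x^2)) (2*t) t := by
      have := (hasDerivAt_pow 2 t).const_add 1
      simpa using this.congr_deriv (by first | ring | (simp only [id_eq]; ring))
    exact ha.mul (hasDerivAt_logterm t)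
  have h3 : HasDerivAt (fun x : ℝ => Real.log 2 * (1-x)^2)
      (Real.log 2 * (2*(1-t)*(-1))) t := by
    have hb : HasDerivAt (fun x : ℝ => (1-x)) (-1) t := by
      simpa using (hasDerivAt_id t).const_sub 1
    have := ((hb.pow 2).const_mul (Real.log 2))
    simpa using this.congr_deriv (by first | ring | (simp only [id_eq]; ring))
  have := (h1.sub h2).sub h3
  have ht' : (1+t^2) ≠ 0 := ne_of_gt (one_add_sq_pos t)
  refine this.congr_deriv ?_
  unfold D1
  field_simp
  ring

lemma hasDerivAt_D1 {t : ℝ} (ht : 0 < t) : HasDerivAt D1 (D2 t) t := by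
  have h1 : HasDerivAt (fun x : ℝ => 4*x*Real.log x)
      (4*Real.log t + 4) t := by
    have := ((hasDerivAt_id t).const_mul (4:ℝ)).mul (Real.hasDerivAt_log (ne_of_gt ht))
    exact this.congr_deriv (by simp only [id_eq]; rw [mul_inv_cancel_right₀ (ne_of_gt ht)]; ring)
  have h2 : HasDerivAt (fun x : ℝ => 2*x*Real.log ((1+x^2)/2))
      (2*Real.log ((1+t^2)/2) + 2*t*(2*t/(1+t^2))) t := by
    have h := ((hasDerivAt_id t).const_mul (2:ℝ)).mul (hasDerivAt_logterm t)
    simp only [id_eq] at h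
    exact h.congr_deriv (by ring)
  have h3 : HasDerivAt (fun x : ℝ => 2*Real.log 2*(1-x)) (-(2*Real.log 2)) t := by
    have hb : HasDerivAt (fun x : ℝ => (1-x)) (-1) t := by
      simpa using (hasDerivAt_id t).const_sub 1
    have := hb.const_mul (2*Real.log 2)
    simpa using this.congr_deriv (by first | ring | (simp only [id_eq]; ring))
  have := (h1.sub h2).add h3
  have ht' : (1+t^2) ≠ 0 := ne_of_gt (one_add_sq_pos t)
  refine this.congr_deriv ?_
  unfold D2
  field_simp
  ring

lemma hasDerivAt_D2 {t : ℝ} (ht : 0 < t) : HasDerivAt D2 (D3 t) t := by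
  have h1 : HasDerivAt (fun x : ℝ => 4*Real.log x) (4/t) t := by
    have := (Real.hasDerivAt_log (ne_of_gt ht)).const_mul (4:ℝ)
    simpa using this.congr_deriv (by field_simp)
  have h2 : HasDerivAt (fun x : ℝ => 2*Real.log ((1+x^2)/2)) (2*(2*t/(1+t^2))) t :=
    (hasDerivAt_logterm t).const_mul (2:ℝ)
  have h3 : HasDerivAt (fun x : ℝ => 4*x^2/(1+x^2))
      ((8*t*(1+t^2) - 4*t^2*(2*t))/(1+t^2)^2) t := by
    have ha : HasDerivAt (fun x : ℝ => 4*x^2) (8*t) t := by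
      have := (hasDerivAt_pow 2 t).const_mul (4:ℝ)
      simpa using this.congr_deriv (by first | ring | (simp only [id_eq]; ring))
    have hb : HasDerivAt (fun x : ℝ => (1+x^2)) (2*t) t := by
      have := (hasDerivAt_pow 2 t).const_add 1
      simpa using this.congr_deriv (by first | ring | (simp only [id_eq]; ring))
    exact ha.div hb (ne_of_gt (one_add_sq_pos t))
  have := ((h1.sub h2).add_const (- 2*Real.log 2 + 4)).sub h3
  have ht' : (1+t^2) ≠ 0 := ne_of_gt (one_add_sq_pos t)
  have heq : D2 = fun x => (4*Real.log x - 2*Real.log ((1+x^2)/2)) + (- 2*Real.log 2 + 4) - 4*x^2/(1+x^2) := by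
    funext x; unfold D2; ring
  rw [heq]
  refine this.congr_deriv ?_
  unfold D3
  field_simp
  ring

lemma D3_nonneg {t : ℝ} (ht0 : 0 < t) (ht1 : t ≤ 1) : 0 ≤ D3 t := by
  unfold D3
  have h : (0:ℝ) < 1 + t^2 := one_add_sq_pos t
  rw [div_sub_div _ _ (ne_of_gt ht0) (ne_of_gt h), div_sub_div _ _ (by positivity) (by positivity)]
  apply div_nonneg _ (by positivity)
  have h2 : t^2 ≤ 1 := by nlinarith
  nlinarith [mul_nonneg h.le (sub_nonneg.2 h2), sq_nonneg t]

lemma Dfun_continuous : Continuous Dfun := by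
  unfold Dfun
  have h1 : Continuous fun t : ℝ => 2*t*(t*Real.log t) :=
    (continuous_const.mul continuous_id).mul Real.continuous_mul_log
  have h2 : Continuous fun t : ℝ => (1+t^2)*Real.log ((1+t^2)/2) := by
    have hc : Continuous fun t : ℝ => (1+t^2)/2 := by continuity
    exact (continuous_const.add (continuous_pow 2)).mul
      (hc.log (fun t => ne_of_gt (by positivity)))
  exact (h1.sub h2).sub (continuous_const.mul ((continuous_const.sub continuous_id).pow 2))

lemma Dfun_zero : Dfun 0 = 0 := by
  unfold Dfun
  norm_num
  rw [one_div, Real.log_inv]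
  ring

lemma Dfun_one : Dfun 1 = 0 := by
  unfold Dfun; norm_num

lemma D1_one : D1 1 = 0 := by
  unfold D1; norm_num

lemma Dfun_nonneg {t : ℝ} (ht0 : 0 < t) (ht1 : t ≤ 1) : 0 ≤ Dfun t := by
  by_contra hcon
  push_neg at hcon
  obtain ⟨w, hwK, hwmin⟩ := isCompact_Icc.exists_isMinOn (Set.nonempty_Icc.2 zero_le_one)
    Dfun_continuous.continuousOn
  have htK : t ∈ Icc (0:ℝ) 1 := ⟨ht0.le, ht1⟩
  have hDw : Dfun w < 0 := lt_of_le_of_lt (hwmin htK) hcon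
  have hw0 : 0 < w := by
    rcases eq_or_lt_of_le hwK.1 with h | h
    · exfalso; rw [← h, Dfun_zero] at hDw; exact lt_irrefl _ hDw
    · exact h
  have hw1 : w < 1 := by
    rcases eq_or_lt_of_le hwK.2 with h | h
    · exfalso; rw [h, Dfun_one] at hDw; exact lt_irrefl _ hDw
    · exact h
  -- local min at interior point: D1 w = 0
  have hloc : IsLocalMin Dfun w :=
    hwmin.isLocalMin (Icc_mem_nhds hw0 hw1)
  have hD1w : D1 w = 0 := hloc.hasDerivAt_eq_zero (hasDerivAt_Dfun hw0)
  -- D2 monotone on [w,1]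
  have hD2cont : ContinuousOn D2 (Icc w 1) := by
    intro s hs
    exact ((hasDerivAt_D2 (lt_of_lt_of_le hw0 hs.1)).continuousAt).continuousWithinAt
  have hD2mono : MonotoneOn D2 (Icc w 1) := by
    apply monotoneOn_of_deriv_nonneg (convex_Icc w 1) hD2cont
    · intro s hs
      rw [interior_Icc] at hs
      exact ((hasDerivAt_D2 (lt_trans hw0 hs.1)).differentiableAt).differentiableWithinAt
    · intro s hs
      rw [interior_Icc] at hs
      rw [(hasDerivAt_D2 (lt_trans hw0 hs.1)).deriv]
      exact D3_nonneg (lt_trans hw0 hs.1) hs.2.le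
  -- D1 convex on [w,1]
  have hD1cont : ContinuousOn D1 (Icc w 1) := by
    intro s hs
    exact ((hasDerivAt_D1 (lt_of_lt_of_le hw0 hs.1)).continuousAt).continuousWithinAt
  have hD1cvx : ConvexOn ℝ (Icc w 1) D1 := by
    apply MonotoneOn.convexOn_of_deriv (convex_Icc w 1) hD1cont
    · intro s hs
      rw [interior_Icc] at hs
      exact ((hasDerivAt_D1 (lt_trans hw0 hs.1)).differentiableAt).differentiableWithinAt
    · rw [interior_Icc]
      have : EqOn (deriv D1) D2 (Ioo w 1) := by
        intro s hs; exact (hasDerivAt_D1 (lt_trans hw0 hs.1)).deriv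
      exact (hD2mono.mono Ioo_subset_Icc_self).congr this.symm
  -- D1 ≤ 0 on [w,1]
  have hD1nonpos : ∀ s ∈ Icc w 1, D1 s ≤ 0 := by
    intro s hs
    have := hD1cvx.le_on_segment (left_mem_Icc.2 (le_of_lt hw1)) (right_mem_Icc.2 (le_of_lt hw1))
      (by rw [segment_eq_Icc (le_of_lt hw1)]; exact hs)
    rw [hD1w, D1_one] at this
    simpa using this
  -- Dfun antitone on [w,1]
  have hDcont : ContinuousOn Dfun (Icc w 1) := Dfun_continuous.continuousOn
  have hanti : AntitoneOn Dfun (Icc w 1) := by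
    apply antitoneOn_of_deriv_nonpos (convex_Icc w 1) hDcont
    · intro s hs
      rw [interior_Icc] at hs
      exact ((hasDerivAt_Dfun (lt_trans hw0 hs.1)).differentiableAt).differentiableWithinAt
    · intro s hs
      rw [interior_Icc] at hs
      rw [(hasDerivAt_Dfun (lt_trans hw0 hs.1)).deriv]
      exact hD1nonpos s (Ioo_subset_Icc_self hs)
  have : Dfun 1 ≤ Dfun w :=
    hanti (left_mem_Icc.2 hw1.le) (right_mem_Icc.2 hw1.le) hw1.le
  rw [Dfun_one] at this
  linarith

lemma corePsi {A B : ℝ} (hA : 0 < A) (hAB : A ≤ B) :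
    Real.log 2 * (Real.sqrt B - Real.sqrt A)^2 ≤
      A*Real.log A + B*Real.log B - (A+B)*Real.log ((A+B)/2) := by
  have hB : 0 < B := lt_of_lt_of_le hA hAB
  set sA := Real.sqrt A with hsA
  set sB := Real.sqrt B with hsB
  have hsA0 : 0 < sA := Real.sqrt_pos.2 hA
  have hsB0 : 0 < sB := Real.sqrt_pos.2 hB
  have hsA2 : sA^2 = A := Real.sq_sqrt hA.le
  have hsB2 : sB^2 = B := Real.sq_sqrt hB.le
  have ht0 : 0 < sA/sB := div_pos hsA0 hsB0
  have ht1 : sA/sB ≤ 1 := by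
    rw [div_le_one hsB0]
    exact Real.sqrt_le_sqrt hAB
  have hD := Dfun_nonneg ht0 ht1
  have e1 : 1 + (sA/sB)^2 = (A+B)/B := by
    rw [div_pow, hsA2, hsB2]; field_simp; ring
  have elogt : Real.log (sA/sB) = Real.log A/2 - Real.log B/2 := by
    rw [Real.log_div (ne_of_gt hsA0) (ne_of_gt hsB0), hsA, hsB,
      Real.log_sqrt hA.le, Real.log_sqrt hB.le]
  have elog1 : Real.log ((A+B)/B/2) = Real.log ((A+B)/2) - Real.log B := by
    rw [show (A+B)/B/2 = ((A+B)/2)/B by ring,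
      Real.log_div (by positivity) (ne_of_gt hB)]
  have key : B * Dfun (sA/sB) =
      (A*Real.log A + B*Real.log B - (A+B)*Real.log ((A+B)/2))
        - Real.log 2*(sB-sA)^2 := by
    unfold Dfun
    rw [e1, elogt, elog1]
    field_simp
    rw [← hsA2, ← hsB2]
    ring
  nlinarith [mul_nonneg hB.le hD]

lemma coreIneq {A X Y B : ℝ} (hA : 0 < A) (h1 : A ≤ X) (h2 : X ≤ Y) (h3 : Y ≤ B) :
    Real.log 2 * ((X - A)*(B - Y)) ≤
      X * (A*Real.log A + B*Real.log B - (A+B)*Real.log ((A+B)/2)) := by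
  have hX : 0 < X := lt_of_lt_of_le hA h1
  have hB : 0 < B := lt_of_lt_of_le hX (le_trans h2 h3)
  have hAB : A ≤ B := le_trans h1 (le_trans h2 h3)
  have hsA2 : (Real.sqrt A)^2 = A := Real.sq_sqrt hA.le
  have hsB2 : (Real.sqrt B)^2 = B := Real.sq_sqrt hB.le
  have hprod : Real.sqrt A * Real.sqrt B ≥ 0 :=
    mul_nonneg (Real.sqrt_nonneg A) (Real.sqrt_nonneg B)
  have step1 : (X - A)*(B - Y) ≤ (X - A)*(B - X) :=
    mul_le_mul_of_nonneg_left (by linarith) (by linarith)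
  have step2 : (X - A)*(B - X) ≤ X * (Real.sqrt B - Real.sqrt A)^2 := by
    nlinarith [sq_nonneg (X - Real.sqrt A * Real.sqrt B)]
  have hlog2 : (0:ℝ) ≤ Real.log 2 := Real.log_nonneg (by norm_num)
  calc Real.log 2 * ((X - A)*(B - Y)) ≤ Real.log 2 * (X * (Real.sqrt B - Real.sqrt A)^2) :=
        mul_le_mul_of_nonneg_left (le_trans step1 step2) hlog2
    _ = X * (Real.log 2 * (Real.sqrt B - Real.sqrt A)^2) := by ring
    _ ≤ X * (A*Real.log A + B*Real.log B - (A+B)*Real.log ((A+B)/2)) :=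
        mul_le_mul_of_nonneg_left (corePsi hA hAB) hX.le

open Real Set MeasureTheory intervalIntegral

noncomputable def Fi (α p q : ℝ) : ℝ := ∫ t in p..q, Real.exp (α*t)

lemma expc (α : ℝ) : Continuous fun t : ℝ => Real.exp (α*t) := by
  continuity

lemma hasDerivAt_expc (α t : ℝ) :
    HasDerivAt (fun s : ℝ => Real.exp (α*s)) (α * Real.exp (α*t)) t := by
  have h := ((hasDerivAt_id t).const_mul α).exp
  simpa [id_eq, mul_comm] using h

lemma Fi_eval {α : ℝ} (hα : α ≠ 0) (p q : ℝ) :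
    Fi α p q = (Real.exp (α*q) - Real.exp (α*p))/α := by
  unfold Fi
  have h : ∀ t ∈ uIcc p q, HasDerivAt (fun s => Real.exp (α*s)/α) (Real.exp (α*t)) t := by
    intro t _
    have := (hasDerivAt_expc α t).div_const α
    refine this.congr_deriv ?_
    field_simp
  rw [integral_eq_sub_of_hasDerivAt h ((expc α).intervalIntegrable p q)]
  field_simp

lemma Fi_zero (p q : ℝ) : Fi 0 p q = q - p := by
  unfold Fi; simp

lemma Fi_nonneg {α p q : ℝ} (h : p ≤ q) : 0 ≤ Fi α p q := by
  unfold Fi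
  apply intervalIntegral.integral_nonneg h
  intro t _; positivity

lemma Fi_pos {α p q : ℝ} (h : p < q) : 0 < Fi α p q := by
  unfold Fi
  apply intervalIntegral.intervalIntegral_pos_of_pos_on ((expc α).intervalIntegrable p q)
  · intro t _; positivity
  · exact h

lemma Fi_add (α p q r : ℝ) : Fi α p q + Fi α q r = Fi α p r :=
  integral_add_adjacent_intervals ((expc α).intervalIntegrable p q) ((expc α).intervalIntegrable q r)

lemma Fi_shift (α p q h : ℝ) : Fi α (p+h) (q+h) = Real.exp (α*h) * Fi α p q := by
  unfold Fi
  rw [← intervalIntegral.integral_comp_add_right (fun t => Real.exp (α*t)) h,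
    ← intervalIntegral.integral_const_mul]
  congr 1
  funext t
  rw [← Real.exp_add]
  ring_nf

lemma Fi_mono_right {α p : ℝ} (q q' : ℝ) (h : q ≤ q') : Fi α p q ≤ Fi α p q' := by
  have := Fi_nonneg (α := α) h
  have hadd := Fi_add α p q q'
  linarith

lemma Fi_lt_right {α p q q' : ℝ} (h : q < q') : Fi α p q < Fi α p q' := by
  have := Fi_pos (α := α) h
  have hadd := Fi_add α p q q'
  linarith

lemma setIntegral_Icc_eq_Fi (α a b : ℝ) (hab : a ≤ b) :
    ∫ t in Icc a b, Real.exp (α*t) = Fi α a b := by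
  rw [MeasureTheory.integral_Icc_eq_integral_Ioc, ← intervalIntegral.integral_of_le hab]
  rfl

noncomputable def Wfun (α a b u : ℝ) : ℝ := ∫ t in Icc a b, |t - u| * Real.exp (α*t)

lemma absc (u : ℝ) : Continuous fun t : ℝ => |t - u| :=
  (continuous_id.sub continuous_const).abs

lemma Wfun_eq (α a b u : ℝ) (hab : a ≤ b) :
    Wfun α a b u = ∫ t in a..b, |t - u| * Real.exp (α*t) := by
  unfold Wfun
  rw [MeasureTheory.integral_Icc_eq_integral_Ioc, ← intervalIntegral.integral_of_le hab]

lemma W_ge_median (α a b u z : ℝ) (haz : a ≤ z) (hzb : z ≤ b)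
    (hmed : Fi α a z = Fi α z b) : Wfun α a b z ≤ Wfun α a b u := by
  have hab : a ≤ b := le_trans haz hzb
  have hc1 : Continuous fun t : ℝ => |t - u| * Real.exp (α*t) :=
    (absc u).mul (expc α)
  have hc2 : Continuous fun t : ℝ => |t - z| * Real.exp (α*t) :=
    (absc z).mul (expc α)
  have hc3 : Continuous fun t : ℝ => (|t - z| + (u - z)) * Real.exp (α*t) :=
    ((absc z).add continuous_const).mul (expc α)
  have hc4 : Continuous fun t : ℝ => (|t - z| + (z - u)) * Real.exp (α*t) :=
    ((absc z).add continuous_const).mul (expc α)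
  have h1 : ∫ t in a..z, (|t - z| + (u - z)) * Real.exp (α*t) ≤
      ∫ t in a..z, |t - u| * Real.exp (α*t) := by
    apply intervalIntegral.integral_mono_on haz (hc3.intervalIntegrable a z)
      (hc1.intervalIntegrable a z)
    intro t ht
    have habs : |t - z| + (u - z) ≤ |t - u| := by
      rcases abs_cases (t - z) with ⟨h, _⟩ | ⟨h, _⟩ <;> rcases abs_cases (t - u) with ⟨h2, _⟩ | ⟨h2, _⟩ <;>
        rcases ht with ⟨ht1, ht2⟩ <;> nlinarith
    exact mul_le_mul_of_nonneg_right habs (Real.exp_nonneg _)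
  have h2 : ∫ t in z..b, (|t - z| + (z - u)) * Real.exp (α*t) ≤
      ∫ t in z..b, |t - u| * Real.exp (α*t) := by
    apply intervalIntegral.integral_mono_on hzb (hc4.intervalIntegrable z b)
      (hc1.intervalIntegrable z b)
    intro t ht
    have habs : |t - z| + (z - u) ≤ |t - u| := by
      rcases abs_cases (t - z) with ⟨h, _⟩ | ⟨h, _⟩ <;> rcases abs_cases (t - u) with ⟨h2, _⟩ | ⟨h2, _⟩ <;>
        rcases ht with ⟨ht1, ht2⟩ <;> nlinarith
    exact mul_le_mul_of_nonneg_right habs (Real.exp_nonneg _)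
  have e1 : ∫ t in a..z, (|t - z| + (u - z)) * Real.exp (α*t) =
      (∫ t in a..z, |t - z| * Real.exp (α*t)) + (u - z) * Fi α a z := by
    have : ∀ t : ℝ, (|t - z| + (u - z)) * Real.exp (α*t) =
        |t - z| * Real.exp (α*t) + (u - z) * Real.exp (α*t) := by intro t; ring
    simp_rw [this]
    rw [intervalIntegral.integral_add (g := fun t => (u - z) * Real.exp (α*t)) (hc2.intervalIntegrable a z)
      (((continuous_const).mul (expc α)).intervalIntegrable a z),
      intervalIntegral.integral_const_mul]
    rfl
  have e2 : ∫ t in z..b, (|t - z| + (z - u)) * Real.exp (α*t) =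
      (∫ t in z..b, |t - z| * Real.exp (α*t)) + (z - u) * Fi α z b := by
    have : ∀ t : ℝ, (|t - z| + (z - u)) * Real.exp (α*t) =
        |t - z| * Real.exp (α*t) + (z - u) * Real.exp (α*t) := by intro t; ring
    simp_rw [this]
    rw [intervalIntegral.integral_add (g := fun t => (z - u) * Real.exp (α*t)) (hc2.intervalIntegrable z b)
      (((continuous_const).mul (expc α)).intervalIntegrable z b),
      intervalIntegral.integral_const_mul]
    rfl
  have hsplitu : Wfun α a b u = (∫ t in a..z, |t - u| * Real.exp (α*t))
      + ∫ t in z..b, |t - u| * Real.exp (α*t) := by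
    rw [Wfun_eq α a b u hab,
      ← intervalIntegral.integral_add_adjacent_intervals (hc1.intervalIntegrable a z)
        (hc1.intervalIntegrable z b)]
  have hsplitz : Wfun α a b z = (∫ t in a..z, |t - z| * Real.exp (α*t))
      + ∫ t in z..b, |t - z| * Real.exp (α*t) := by
    rw [Wfun_eq α a b z hab,
      ← intervalIntegral.integral_add_adjacent_intervals (hc2.intervalIntegrable a z)
        (hc2.intervalIntegrable z b)]
  rw [hsplitu, hsplitz]
  have hcancel : (u - z) * Fi α a z + (z - u) * Fi α z b = 0 := by rw [hmed]; ring
  linarith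

lemma I1_eval {α : ℝ} (hα : α ≠ 0) (p q z : ℝ) :
    ∫ t in p..q, (z - t) * Real.exp (α*t) =
      ((z-q)/α + 1/α^2) * Real.exp (α*q) - ((z-p)/α + 1/α^2) * Real.exp (α*p) := by
  have h : ∀ t ∈ uIcc p q,
      HasDerivAt (fun s => ((z-s)/α + 1/α^2) * Real.exp (α*s)) ((z-t) * Real.exp (α*t)) t := by
    intro t _
    have hlin : HasDerivAt (fun s : ℝ => (z-s)/α + 1/α^2) (-1/α) t := by
      have := (((hasDerivAt_id t).const_sub z).div_const α).add_const (1/α^2)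
      simpa using this.congr_deriv (by ring)
    have := hlin.mul (hasDerivAt_expc α t)
    exact this.congr_deriv (by field_simp; ring)
  rw [integral_eq_sub_of_hasDerivAt h
    (((continuous_const.sub continuous_id).mul (expc α)).intervalIntegrable p q)]

lemma I2_eval {α : ℝ} (hα : α ≠ 0) (p q z : ℝ) :
    ∫ t in p..q, (t - z) * Real.exp (α*t) =
      ((q-z)/α - 1/α^2) * Real.exp (α*q) - ((p-z)/α - 1/α^2) * Real.exp (α*p) := by
  have h : ∀ t ∈ uIcc p q,
      HasDerivAt (fun s => ((s-z)/α - 1/α^2) * Real.exp (α*s)) ((t-z) * Real.exp (α*t)) t := by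
    intro t _
    have hlin : HasDerivAt (fun s : ℝ => (s-z)/α - 1/α^2) (1/α) t := by
      have := (((hasDerivAt_id t).sub_const z).div_const α).sub_const (1/α^2)
      simpa using this.congr_deriv (by ring)
    have := hlin.mul (hasDerivAt_expc α t)
    exact this.congr_deriv (by field_simp; ring)
  rw [integral_eq_sub_of_hasDerivAt h
    (((continuous_id.sub continuous_const).mul (expc α)).intervalIntegrable p q)]

lemma W_median_eval {α : ℝ} (hα : α ≠ 0) (a b z : ℝ) (haz : a ≤ z) (hzb : z ≤ b)
    (hz : Real.exp (α*z) = (Real.exp (α*a) + Real.exp (α*b))/2) :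
    Wfun α a b z = (Real.exp (α*a) * Real.log (Real.exp (α*a))
      + Real.exp (α*b) * Real.log (Real.exp (α*b))
      - (Real.exp (α*a) + Real.exp (α*b)) * Real.log ((Real.exp (α*a) + Real.exp (α*b))/2))/α^2 := by
  have hab : a ≤ b := le_trans haz hzb
  set A0 := Real.exp (α*a) with hA0
  set B0 := Real.exp (α*b) with hB0
  have hc2 : Continuous fun t : ℝ => |t - z| * Real.exp (α*t) := (absc z).mul (expc α)
  have hsplit : Wfun α a b z = (∫ t in a..z, |t - z| * Real.exp (α*t))
      + ∫ t in z..b, |t - z| * Real.exp (α*t) := by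
    rw [Wfun_eq α a b z hab,
      ← intervalIntegral.integral_add_adjacent_intervals (hc2.intervalIntegrable a z)
        (hc2.intervalIntegrable z b)]
  have e1 : ∫ t in a..z, |t - z| * Real.exp (α*t) = ∫ t in a..z, (z - t) * Real.exp (α*t) := by
    apply intervalIntegral.integral_congr
    intro t ht
    rw [uIcc_of_le haz] at ht
    have h' : |t - z| = z - t := by rw [abs_of_nonpos (by linarith [ht.2])]; ring
    simp only [h']
  have e2 : ∫ t in z..b, |t - z| * Real.exp (α*t) = ∫ t in z..b, (t - z) * Real.exp (α*t) := by
    apply intervalIntegral.integral_congr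
    intro t ht
    rw [uIcc_of_le hzb] at ht
    have h' : |t - z| = t - z := abs_of_nonneg (by linarith [ht.1])
    simp only [h']
  rw [hsplit, e1, e2, I1_eval hα, I2_eval hα]
  -- now express z, a, b via logs
  have hla : Real.log A0 = α*a := Real.log_exp _
  have hlb : Real.log B0 = α*b := Real.log_exp _
  have hlz : Real.log ((A0+B0)/2) = α*z := by rw [← hz]; exact Real.log_exp _
  rw [hz, ← hA0, ← hB0]
  have ha' : a = Real.log A0 / α := by rw [hla]; field_simp
  have hb' : b = Real.log B0 / α := by rw [hlb]; field_simp
  have hz' : z = Real.log ((A0+B0)/2) / α := by rw [hlz]; field_simp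
  rw [ha', hb', hz']
  field_simp
  ring

set_option maxHeartbeats 1000000 in
lemma step2 {α a b x y u ε : ℝ} (hε : 0 < ε) (hax : a ≤ x) (hxy : x + ε ≤ y)
    (hyb : y ≤ b) (hua : a ≤ u) (hub : u ≤ b) :
    ε * Real.log 2 * (Fi α a x * Fi α y b) ≤ Fi α x y * Wfun α a b u := by
  have hxy' : x ≤ y := by linarith
  have hab : a ≤ b := by linarith
  have hlog2 : (0:ℝ) ≤ Real.log 2 := Real.log_nonneg (by norm_num)
  have hlog2' : Real.log 2 ≤ 1 := by
    have := Real.log_le_sub_one_of_pos (show (0:ℝ) < 2 by norm_num)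
    linarith
  rcases eq_or_ne α 0 with h0 | hα
  · -- α = 0 case
    subst h0
    rw [Fi_zero, Fi_zero, Fi_zero]
    have hW : ((u-a)^2 + (b-u)^2)/2 ≤ Wfun 0 a b u := by
      have hsplit : Wfun 0 a b u = (∫ t in a..u, |t - u| * Real.exp (0*t))
          + ∫ t in u..b, |t - u| * Real.exp (0*t) := by
        rw [Wfun_eq 0 a b u hab,
          ← intervalIntegral.integral_add_adjacent_intervals (f := fun t => |t - u| * Real.exp (0*t))
            (((absc u).mul (expc 0)).intervalIntegrable a u)
            (((absc u).mul (expc 0)).intervalIntegrable u b)]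
      have e1 : ∫ t in a..u, |t - u| * Real.exp (0*t) = ∫ t in a..u, (u - t) := by
        apply intervalIntegral.integral_congr
        intro t ht
        rw [uIcc_of_le hua] at ht
        have h' : |t - u| = u - t := by rw [abs_of_nonpos (by linarith [ht.2])]; ring
        simp [h']
      have e2 : ∫ t in u..b, |t - u| * Real.exp (0*t) = ∫ t in u..b, (t - u) := by
        apply intervalIntegral.integral_congr
        intro t ht
        rw [uIcc_of_le hub] at ht
        have h' : |t - u| = t - u := abs_of_nonneg (by linarith [ht.1])
        simp [h']
      have v1 : ∫ t in a..u, (u - t) = (u-a)^2/2 := by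
        have h : ∀ t ∈ uIcc a u, HasDerivAt (fun s : ℝ => u*s - s^2/2) (u - t) t := by
          intro t _
          have h2 := ((hasDerivAt_id t).const_mul u).sub ((hasDerivAt_pow 2 t).div_const 2)
          simp only [id_eq] at h2
          exact h2.congr_deriv (by ring)
        rw [integral_eq_sub_of_hasDerivAt h
          ((continuous_const.sub continuous_id).intervalIntegrable a u)]
        ring
      have v2 : ∫ t in u..b, (t - u) = (b-u)^2/2 := by
        have h : ∀ t ∈ uIcc u b, HasDerivAt (fun s : ℝ => s^2/2 - u*s) (t - u) t := by
          intro t _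
          have h2 := ((hasDerivAt_pow 2 t).div_const 2).sub ((hasDerivAt_id t).const_mul u)
          simp only [id_eq] at h2
          exact h2.congr_deriv (by ring)
        rw [integral_eq_sub_of_hasDerivAt h
          ((continuous_id.sub continuous_const).intervalIntegrable u b)]
        ring
      rw [hsplit, e1, e2, v1, v2]
      ring_nf
      nlinarith [sq_nonneg (u - a), sq_nonneg (b - u)]
    have h1 : (x - a) * (b - y) ≤ ((u-a)^2 + (b-u)^2)/2 := by
      nlinarith [sq_nonneg ((u-a) - (b-u)), sq_nonneg ((x-a) - (b-y))]
    have hP : 0 ≤ x - a := by linarith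
    have hR : 0 ≤ b - y := by linarith
    have hQ : ε ≤ y - x := by linarith
    calc ε * Real.log 2 * ((x - a) * (b - y))
        ≤ (y - x) * 1 * ((x-a)*(b-y)) := by
          apply mul_le_mul_of_nonneg_right _ (mul_nonneg hP hR)
          nlinarith
      _ = (y - x) * ((x-a)*(b-y)) := by ring
      _ ≤ (y - x) * (((u-a)^2 + (b-u)^2)/2) := by
          apply mul_le_mul_of_nonneg_left h1 (by linarith)
      _ ≤ (y - x) * Wfun 0 a b u := mul_le_mul_of_nonneg_left hW (by linarith)
  · -- α ≠ 0
    set A0 := Real.exp (α*a) with hA0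
    set B0 := Real.exp (α*b) with hB0
    have hA0pos : 0 < A0 := Real.exp_pos _
    have hB0pos : 0 < B0 := Real.exp_pos _
    have hmidpos : 0 < (A0+B0)/2 := by positivity
    set z := Real.log ((A0+B0)/2)/α with hzdef
    have hαz : α * z = Real.log ((A0+B0)/2) := by
      rw [hzdef]; field_simp
    have hexpz : Real.exp (α*z) = (A0+B0)/2 := by
      rw [hαz, Real.exp_log hmidpos]
    set Ψ := A0 * Real.log A0 + B0 * Real.log B0 - (A0+B0) * Real.log ((A0+B0)/2) with hΨ
    have hla : Real.log A0 = α*a := Real.log_exp _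
    have hlb : Real.log B0 = α*b := Real.log_exp _
    have haz : a ≤ z ∧ z ≤ b := by
      rcases lt_or_gt_of_ne hα with hneg | hpos
      · -- α < 0 : A0 ≥ B0
        have hBA : B0 ≤ A0 := Real.exp_le_exp.2 (mul_le_mul_of_nonpos_left hab hneg.le)
        have l1 : Real.log ((A0+B0)/2) ≤ Real.log A0 :=
          Real.log_le_log (by positivity) (by linarith)
        have l2 : Real.log B0 ≤ Real.log ((A0+B0)/2) :=
          Real.log_le_log hB0pos (by linarith)
        constructor
        · rw [hzdef, le_div_iff_of_neg hneg]; rw [hla] at l1; linarith [l1]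
        · rw [hzdef, div_le_iff_of_neg hneg]; rw [hlb] at l2; linarith [l2]
      · have hAB : A0 ≤ B0 := Real.exp_le_exp.2 (mul_le_mul_of_nonneg_left hab hpos.le)
        have l1 : Real.log A0 ≤ Real.log ((A0+B0)/2) :=
          Real.log_le_log hA0pos (by linarith)
        have l2 : Real.log ((A0+B0)/2) ≤ Real.log B0 :=
          Real.log_le_log (by positivity) (by linarith)
        constructor
        · rw [hzdef, le_div_iff₀ hpos]; rw [hla] at l1; linarith [l1]
        · rw [hzdef, div_le_iff₀ hpos]; rw [hlb] at l2; linarith [l2]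
    have hmedF : Fi α a z = Fi α z b := by
      rw [Fi_eval hα, Fi_eval hα, hexpz, ← hA0, ← hB0]
      ring
    have hWmed : Wfun α a b z = Ψ/α^2 := by
      have := W_median_eval hα a b z haz.1 haz.2 hexpz
      rw [this, ← hA0, ← hB0, hΨ]
    have hW : Ψ/α^2 ≤ Wfun α a b u := by
      rw [← hWmed]
      exact W_ge_median α a b u z haz.1 haz.2 hmedF
    set X := Real.exp (α*x) with hX
    set Y := Real.exp (α*y) with hY
    have hXpos : 0 < X := Real.exp_pos _
    have hYpos : 0 < Y := Real.exp_pos _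
    have hlX : Real.log X = α*x := Real.log_exp _
    have hlY : Real.log Y = α*y := Real.log_exp _
    have hFax : Fi α a x = (X - A0)/α := by rw [Fi_eval hα]
    have hFyb : Fi α y b = (B0 - Y)/α := by rw [Fi_eval hα]
    have hFxy : Fi α x y = (Y - X)/α := by rw [Fi_eval hα]
    have hFxy0 : 0 ≤ Fi α x y := Fi_nonneg hxy'
    have main : ε * Real.log 2 * (Fi α a x * Fi α y b) ≤ Fi α x y * (Ψ/α^2) := by
      rcases lt_or_gt_of_ne hα with hneg | hpos
      · -- α < 0 : B0 ≤ Y ≤ X ≤ A0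
        have o1 : B0 ≤ Y := Real.exp_le_exp.2 (mul_le_mul_of_nonpos_left hyb hneg.le)
        have o2 : Y ≤ X := Real.exp_le_exp.2 (mul_le_mul_of_nonpos_left hxy' hneg.le)
        have o3 : X ≤ A0 := Real.exp_le_exp.2 (mul_le_mul_of_nonpos_left hax hneg.le)
        have hcore := coreIneq hB0pos o1 o2 o3
        rw [add_comm B0 A0] at hcore
        have hΨc : B0 * Real.log B0 + A0 * Real.log A0 - (A0+B0) * Real.log ((A0+B0)/2) = Ψ := by
          rw [hΨ]; ring
        rw [hΨc] at hcore
        have hlr : Real.log (X/Y) ≤ X/Y - 1 := Real.log_le_sub_one_of_pos (by positivity)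
        have hεb : ε * (-α * Y) ≤ X - Y := by
          rw [Real.log_div (ne_of_gt hXpos) (ne_of_gt hYpos), hlX, hlY] at hlr
          have h' : -α * ε ≤ X/Y - 1 := by
            nlinarith [mul_le_mul_of_nonpos_left (show x - y ≤ -ε from by linarith) hneg.le]
          calc ε * (-α * Y) = (-α * ε) * Y := by ring
            _ ≤ (X/Y - 1) * Y := mul_le_mul_of_nonneg_right h' hYpos.le
            _ = X - Y := by field_simp
        have hc := mul_le_mul hεb hcore
          (mul_nonneg hlog2 (mul_nonneg (by linarith) (by linarith)))
          (by linarith)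
        have key' : ε * (-α) * (Real.log 2 * ((Y - B0)*(A0 - X))) ≤ (X - Y) * Ψ := by
          have el : (ε * (-α * Y)) * (Real.log 2 * ((Y - B0)*(A0 - X)))
              = Y * (ε * (-α) * (Real.log 2 * ((Y - B0)*(A0 - X)))) := by ring
          have er : (X - Y) * (Y * Ψ) = Y * ((X - Y) * Ψ) := by ring
          rw [el, er] at hc
          exact le_of_mul_le_mul_left hc hYpos
        have expand : Fi α x y * (Ψ/α^2) - ε * Real.log 2 * (Fi α a x * Fi α y b)
            = ((Y - X) * Ψ - ε * α * (Real.log 2 * ((X - A0)*(B0 - Y))))/α^3 := by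
          rw [hFax, hFyb, hFxy]
          field_simp
        have hnum : (Y - X) * Ψ - ε * α * (Real.log 2 * ((X - A0)*(B0 - Y))) ≤ 0 := by
          have e : ε * α * (Real.log 2 * ((X - A0)*(B0 - Y)))
              = -(ε * (-α) * (Real.log 2 * ((Y - B0)*(A0 - X)))) := by ring
          have e2 : (Y - X) * Ψ = -((X - Y) * Ψ) := by ring
          linarith [key', e, e2]
        have hden : α^3 < 0 := Odd.pow_neg ⟨1, by norm_num⟩ hneg
        have : 0 ≤ Fi α x y * (Ψ/α^2) - ε * Real.log 2 * (Fi α a x * Fi α y b) := by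
          rw [expand]
          exact div_nonneg_of_nonpos hnum hden.le
        linarith
      · -- α > 0 : A0 ≤ X ≤ Y ≤ B0
        have o1 : A0 ≤ X := Real.exp_le_exp.2 (mul_le_mul_of_nonneg_left hax hpos.le)
        have o2 : X ≤ Y := Real.exp_le_exp.2 (mul_le_mul_of_nonneg_left hxy' hpos.le)
        have o3 : Y ≤ B0 := Real.exp_le_exp.2 (mul_le_mul_of_nonneg_left hyb hpos.le)
        have hcore := coreIneq hA0pos o1 o2 o3
        rw [← hΨ] at hcore
        have hlr : Real.log (Y/X) ≤ Y/X - 1 := Real.log_le_sub_one_of_pos (by positivity)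
        have hεb : ε * (α * X) ≤ Y - X := by
          rw [Real.log_div (ne_of_gt hYpos) (ne_of_gt hXpos), hlX, hlY] at hlr
          have h' : α * ε ≤ Y/X - 1 := by
            nlinarith [mul_le_mul_of_nonneg_left (show ε ≤ y - x from by linarith) hpos.le]
          calc ε * (α * X) = (α * ε) * X := by ring
            _ ≤ (Y/X - 1) * X := mul_le_mul_of_nonneg_right h' hXpos.le
            _ = Y - X := by field_simp
        have hc := mul_le_mul hεb hcore
          (mul_nonneg hlog2 (mul_nonneg (by linarith) (by linarith)))
          (by linarith)
        have key' : ε * α * (Real.log 2 * ((X - A0)*(B0 - Y))) ≤ (Y - X) * Ψ := by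
          have el : (ε * (α * X)) * (Real.log 2 * ((X - A0)*(B0 - Y)))
              = X * (ε * α * (Real.log 2 * ((X - A0)*(B0 - Y)))) := by ring
          have er : (Y - X) * (X * Ψ) = X * ((Y - X) * Ψ) := by ring
          rw [el, er] at hc
          exact le_of_mul_le_mul_left hc hXpos
        have expand : Fi α x y * (Ψ/α^2) - ε * Real.log 2 * (Fi α a x * Fi α y b)
            = ((Y - X) * Ψ - ε * α * (Real.log 2 * ((X - A0)*(B0 - Y))))/α^3 := by
          rw [hFax, hFyb, hFxy]
          field_simp
        have : 0 ≤ Fi α x y * (Ψ/α^2) - ε * Real.log 2 * (Fi α a x * Fi α y b) := by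
          rw [expand]
          apply div_nonneg (by linarith) (by positivity)
        linarith
    calc ε * Real.log 2 * (Fi α a x * Fi α y b) ≤ Fi α x y * (Ψ/α^2) := main
      _ ≤ Fi α x y * Wfun α a b u := mul_le_mul_of_nonneg_left hW hFxy0

lemma gapLow {a b ε : ℝ} (hε : 0 < ε) {P Q J₂ : Set ℝ}
    (hcov : ∀ r ∈ Icc a b, r ∉ P → r ∉ Q → r ∈ J₂)
    (hsep : ∀ s ∈ P, ∀ t ∈ Q, ε ≤ |s - t|)
    (hPab : P ⊆ Icc a b) (hQab : Q ⊆ Icc a b)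
    {s t : ℝ} (hs : s ∈ P) (ht : t ∈ Q) (hst : s < t) :
    ∃ c, s + ε ≤ c ∧ c ≤ t ∧ Ioo (c-ε) c ⊆ J₂ := by
  set S := Q ∩ Icc s t with hS
  have hSne : S.Nonempty := ⟨t, ht, ⟨hst.le, le_refl t⟩⟩
  have hSbdd : BddBelow S := ⟨s, fun q hq => hq.2.1⟩
  set c := sInf S with hc
  have hcmem : ∀ q ∈ S, s + ε ≤ q := by
    intro q hq
    have := hsep s hs q hq.1
    rcases abs_cases (s - q) with ⟨h1, _⟩ | ⟨h1, _⟩ <;> [skip; skip] <;>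
      (first | (exfalso; have := hq.2.1; linarith) | linarith)
  have hcge : s + ε ≤ c := le_csInf hSne hcmem
  have hcle : c ≤ t := csInf_le hSbdd ⟨ht, ⟨hst.le, le_refl t⟩⟩
  refine ⟨c, hcge, hcle, ?_⟩
  intro r hr
  obtain ⟨hr1, hr2⟩ := hr
  have hrab : r ∈ Icc a b := by
    constructor
    · have : a ≤ s := (hPab hs).1
      have : s ≤ c - ε := by linarith
      linarith
    · have : t ≤ b := (hQab ht).2
      linarith
  have hrQ : r ∉ Q := by
    intro hrQ'
    have hrS : r ∈ S := ⟨hrQ', ⟨by linarith [hcge], by linarith⟩⟩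
    exact absurd (csInf_le hSbdd hrS) (by linarith)
  have hrP : r ∉ P := by
    intro hrP'
    obtain ⟨q, hqS, hq⟩ := exists_lt_of_csInf_lt hSne (show c < r + ε by linarith)
    have h1 : c ≤ q := csInf_le hSbdd hqS
    have := hsep r hrP' q hqS.1
    rcases abs_cases (r - q) with ⟨h2, _⟩ | ⟨h2, _⟩ <;> linarith
  exact hcov r hrab hrP hrQ

lemma gapHigh {a b ε : ℝ} (hε : 0 < ε) {P Q J₂ : Set ℝ}
    (hcov : ∀ r ∈ Icc a b, r ∉ P → r ∉ Q → r ∈ J₂)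
    (hsep : ∀ s ∈ P, ∀ t ∈ Q, ε ≤ |s - t|)
    (hPab : P ⊆ Icc a b) (hQab : Q ⊆ Icc a b)
    {s t : ℝ} (hs : s ∈ P) (ht : t ∈ Q) (hst : t < s) :
    ∃ c, t ≤ c ∧ c + ε ≤ s ∧ Ioo c (c+ε) ⊆ J₂ := by
  set S := Q ∩ Icc t s with hS
  have hSne : S.Nonempty := ⟨t, ht, ⟨le_refl t, hst.le⟩⟩
  have hSbdd : BddAbove S := ⟨s, fun q hq => hq.2.2⟩
  set c := sSup S with hc
  have hcmem : ∀ q ∈ S, q ≤ s - ε := by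
    intro q hq
    have := hsep s hs q hq.1
    rcases abs_cases (s - q) with ⟨h1, _⟩ | ⟨h1, _⟩ <;> [skip; skip] <;>
      (first | linarith | (exfalso; have := hq.2.2; linarith))
  have hcge : c + ε ≤ s := by
    have := csSup_le hSne hcmem
    linarith
  have hcle : t ≤ c := le_csSup hSbdd ⟨ht, ⟨le_refl t, hst.le⟩⟩
  refine ⟨c, hcle, hcge, ?_⟩
  intro r hr
  obtain ⟨hr1, hr2⟩ := hr
  have hrab : r ∈ Icc a b := by
    constructor
    · have : a ≤ t := (hQab ht).1
      linarith
    · have : s ≤ b := (hPab hs).2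
      linarith
  have hrQ : r ∉ Q := by
    intro hrQ'
    have hrS : r ∈ S := ⟨hrQ', ⟨by linarith, by linarith⟩⟩
    exact absurd (le_csSup hSbdd hrS) (by linarith)
  have hrP : r ∉ P := by
    intro hrP'
    obtain ⟨q, hqS, hq⟩ := exists_lt_of_lt_csSup hSne (show r - ε < c by linarith)
    have h1 : q ≤ c := le_csSup hSbdd hqS
    have := hsep r hrP' q hqS.1
    rcases abs_cases (r - q) with ⟨h2, _⟩ | ⟨h2, _⟩ <;> linarith
  exact hcov r hrab hrP hrQ

lemma Fi_lt_left {α q : ℝ} {p p' : ℝ} (h : p < p') : Fi α p' q < Fi α p q := by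
  have h1 := Fi_pos (α := α) h
  have h2 := Fi_add α p p' q
  linarith

set_option maxHeartbeats 1000000 in
lemma supcase {α a b ε : ℝ} (hε : 0 < ε) (hab : a ≤ b) (hα : 0 ≤ α)
    {P Q J₂ : Set ℝ}
    (hmP : MeasurableSet P) (hmQ : MeasurableSet Q) (hmJ : MeasurableSet J₂)
    (hcov : ∀ r ∈ Icc a b, r ∉ P → r ∉ Q → r ∈ J₂)
    (hsep : ∀ s ∈ P, ∀ t ∈ Q, ε ≤ |s - t|)
    (hPab : P ⊆ Icc a b) (hQab : Q ⊆ Icc a b) (hJab : J₂ ⊆ Icc a b)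
    (hsum : (∫ t in P, Real.exp (α*t)) + (∫ t in J₂, Real.exp (α*t))
      + (∫ t in Q, Real.exp (α*t)) = Fi α a b)
    (hP : 0 < ∫ t in P, Real.exp (α*t)) (hQ : 0 < ∫ t in Q, Real.exp (α*t))
    (hS : sSup P < sSup Q) :
    ∃ x y, a ≤ x ∧ x + ε ≤ y ∧ y ≤ b ∧
      Fi α a x = (∫ t in P, Real.exp (α*t)) ∧ Fi α y b = (∫ t in Q, Real.exp (α*t)) ∧
      Fi α x y ≤ (∫ t in J₂, Real.exp (α*t)) := by
  set νP := ∫ t in P, Real.exp (α*t) with hνP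
  set νQ := ∫ t in Q, Real.exp (α*t) with hνQ
  set νJ := ∫ t in J₂, Real.exp (α*t) with hνJ
  set M := Fi α a b with hMdef
  have hνJ0 : 0 ≤ νJ := setIntegral_nonneg hmJ (fun t _ => (Real.exp_nonneg _))
  have hintAll : IntegrableOn (fun t => Real.exp (α*t)) (Icc a b) volume :=
    (expc α).integrableOn_Icc
  -- IVT for x
  have hGc : Continuous fun v => Fi α a v :=
    intervalIntegral.continuous_primitive (fun p q => (expc α).intervalIntegrable p q) a
  have hGa : Fi α a a = 0 := intervalIntegral.integral_same
  have hPM : νP ≤ M := by linarith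
  obtain ⟨x, hxI, hGx⟩ := intermediate_value_Icc hab hGc.continuousOn
    (show νP ∈ Icc (Fi α a a) (Fi α a b) from by rw [hGa]; exact ⟨hP.le, hPM⟩)
  have hGx : Fi α a x = νP := hGx
  -- IVT for y
  have hHc : Continuous fun v => Fi α v b := by
    have he : (fun v => Fi α v b) = fun v => Fi α a b - Fi α a v := by
      funext v
      have := Fi_add α a v b
      linarith
    rw [he]
    exact continuous_const.sub hGc
  have hHb : Fi α b b = 0 := intervalIntegral.integral_same
  obtain ⟨y, hyI, hHy⟩ := intermediate_value_Icc' hab hHc.continuousOn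
    (show νQ ∈ Icc (Fi α b b) (Fi α a b) from by rw [hHb]; exact ⟨hQ.le, by linarith⟩)
  have hHy : Fi α y b = νQ := hHy
  have hxy : x ≤ y := by
    by_contra hxy'
    push_neg at hxy'
    have h1 : Fi α a y < Fi α a x := Fi_lt_right hxy'
    have h2 : Fi α a y + Fi α y b = M := Fi_add α a y b
    rw [hGx] at h1
    rw [hHy] at h2
    linarith
  have hFxy : Fi α x y = νJ := by
    have h1 : Fi α a x + Fi α x y = Fi α a y := Fi_add α a x y
    have h2 : Fi α a y + Fi α y b = M := Fi_add α a y b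
    rw [hGx] at h1
    rw [hHy] at h2
    linarith
  -- nonemptiness and sup bounds
  have hPne : P.Nonempty := by
    rcases P.eq_empty_or_nonempty with h | h
    · exfalso; rw [h] at hνP; simp at hνP; rw [hνP] at hP; exact lt_irrefl _ hP
    · exact h
  have hQne : Q.Nonempty := by
    rcases Q.eq_empty_or_nonempty with h | h
    · exfalso; rw [h] at hνQ; simp at hνQ; rw [hνQ] at hQ; exact lt_irrefl _ hQ
    · exact h
  have hbddP : BddAbove P := ⟨b, fun p hp => (hPab hp).2⟩
  have hS1b : sSup P ≤ b := csSup_le hPne (fun p hp => (hPab hp).2)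
  have hS1a : a ≤ sSup P := by
    obtain ⟨p, hp⟩ := hPne
    exact le_trans (hPab hp).1 (le_csSup hbddP hp)
  have hνPle : νP ≤ Fi α a (sSup P) := by
    rw [hνP, ← setIntegral_Icc_eq_Fi α a (sSup P) hS1a]
    apply setIntegral_mono_set (hintAll.mono_set (Icc_subset_Icc_right hS1b))
      (Filter.Eventually.of_forall (fun t => Real.exp_nonneg _))
    exact Filter.Eventually.of_forall (fun p hp => ⟨(hPab hp).1, le_csSup hbddP hp⟩)
  have hxle : x ≤ sSup P := by
    by_contra hx'
    push_neg at hx'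
    have := Fi_lt_right (α := α) (p := a) hx'
    rw [hGx] at this
    linarith
  -- the key gap estimate, for every δ > 0
  have claim : ∀ δ : ℝ, 0 < δ →
      Fi α x (x+ε) - α * δ * Fi α x (x+ε) ≤ νJ := by
    intro δ hδ
    obtain ⟨s, hs, hslt⟩ := exists_lt_of_lt_csSup hPne (show sSup P - δ < sSup P by linarith)
    have hbddQ : BddAbove Q := ⟨b, fun q hq => (hQab hq).2⟩
    obtain ⟨t, ht, htlt⟩ := exists_lt_of_lt_csSup hQne
      (show max (sSup Q - δ) (sSup P) < sSup Q from max_lt (by linarith) hS)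
    have hst : s < t := lt_of_le_of_lt (le_csSup hbddP hs) (lt_of_le_of_lt (le_max_right _ _) htlt)
    obtain ⟨c, hc1, hc2, hc3⟩ := gapLow hε hcov hsep hPab hQab hs ht hst
    have hgapν : Fi α (c-ε) c ≤ νJ := by
      have hceps : c - ε ≤ c := by linarith
      have e1 : Fi α (c-ε) c = ∫ t in Ioo (c-ε) c, Real.exp (α*t) := by
        unfold Fi
        rw [intervalIntegral.integral_of_le hceps, MeasureTheory.integral_Ioc_eq_integral_Ioo]
      rw [e1, hνJ]
      apply setIntegral_mono_set (hintAll.mono_set hJab)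
        (Filter.Eventually.of_forall (fun t => Real.exp_nonneg _))
      exact Filter.Eventually.of_forall hc3
    -- position: x ≤ c - ε + δ
    have hpos : x ≤ c - ε + δ := by
      have : s ≤ c - ε := by linarith
      linarith [hslt, hxle]
    set h := (c - ε) - (x - δ) with hh
    have hh0 : 0 ≤ h := by rw [hh]; linarith
    have e2 : Fi α (c-ε) c = Real.exp (α*h) * Fi α (x-δ) (x-δ+ε) := by
      have := Fi_shift α (x-δ) (x-δ+ε) h
      rw [show x-δ+h = c-ε by rw [hh]; ring, show x-δ+ε+h = c by rw [hh]; ring] at this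
      exact this
    have e3 : Fi α (x-δ) (x-δ+ε) = Real.exp (α*(-δ)) * Fi α x (x+ε) := by
      have := Fi_shift α x (x+ε) (-δ)
      rw [show x+(-δ) = x-δ by ring, show x+ε+(-δ) = x-δ+ε by ring] at this
      exact this
    have hF0 : 0 ≤ Fi α (x-δ) (x-δ+ε) := Fi_nonneg (by linarith)
    have hexp1 : (1:ℝ) ≤ Real.exp (α*h) := Real.one_le_exp (by positivity)
    have step1 : Fi α (x-δ) (x-δ+ε) ≤ νJ := by
      nlinarith [hgapν, e2]
    have hexp2 : 1 - α*δ ≤ Real.exp (α*(-δ)) := by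
      have := Real.add_one_le_exp (α*(-δ))
      linarith
    have hFx0 : 0 ≤ Fi α x (x+ε) := Fi_nonneg (by linarith)
    nlinarith [step1, e3]
  -- pass to the limit δ → 0
  have hkey : Fi α x (x+ε) ≤ νJ := by
    apply le_of_forall_pos_le_add
    intro η hη
    have hFx0 : 0 ≤ Fi α x (x+ε) := Fi_nonneg (by linarith)
    set K := α * Fi α x (x+ε) with hK
    have hK0 : 0 ≤ K := mul_nonneg hα hFx0
    have hδpos : 0 < η / (K + 1) := div_pos hη (by linarith)
    have := claim (η / (K + 1)) hδpos
    have hsmall : α * (η / (K + 1)) * Fi α x (x+ε) ≤ η := by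
      rw [show α * (η / (K + 1)) * Fi α x (x+ε) = K * η / (K+1) by rw [hK]; ring]
      rw [div_le_iff₀ (by linarith : (0:ℝ) < K + 1)]
      nlinarith
    linarith
  have hxεy : x + ε ≤ y := by
    by_contra hy'
    push_neg at hy'
    have := Fi_lt_right (α := α) (p := x) hy'
    rw [hFxy] at this
    linarith
  exact ⟨x, y, hxI.1, hxεy, hyI.2, hGx, hHy, le_of_eq hFxy⟩

set_option maxHeartbeats 1000000 in
lemma infcase {α a b ε : ℝ} (hε : 0 < ε) (hab : a ≤ b) (hα : α ≤ 0)
    {P Q J₂ : Set ℝ}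
    (hmP : MeasurableSet P) (hmQ : MeasurableSet Q) (hmJ : MeasurableSet J₂)
    (hcov : ∀ r ∈ Icc a b, r ∉ P → r ∉ Q → r ∈ J₂)
    (hsep : ∀ s ∈ P, ∀ t ∈ Q, ε ≤ |s - t|)
    (hPab : P ⊆ Icc a b) (hQab : Q ⊆ Icc a b) (hJab : J₂ ⊆ Icc a b)
    (hsum : (∫ t in P, Real.exp (α*t)) + (∫ t in J₂, Real.exp (α*t))
      + (∫ t in Q, Real.exp (α*t)) = Fi α a b)
    (hP : 0 < ∫ t in P, Real.exp (α*t)) (hQ : 0 < ∫ t in Q, Real.exp (α*t))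
    (hS : sInf Q < sInf P) :
    ∃ x y, a ≤ x ∧ x + ε ≤ y ∧ y ≤ b ∧
      Fi α a x = (∫ t in Q, Real.exp (α*t)) ∧ Fi α y b = (∫ t in P, Real.exp (α*t)) ∧
      Fi α x y ≤ (∫ t in J₂, Real.exp (α*t)) := by
  set νP := ∫ t in P, Real.exp (α*t) with hνP
  set νQ := ∫ t in Q, Real.exp (α*t) with hνQ
  set νJ := ∫ t in J₂, Real.exp (α*t) with hνJ
  set M := Fi α a b with hMdef
  have hνJ0 : 0 ≤ νJ := setIntegral_nonneg hmJ (fun t _ => (Real.exp_nonneg _))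
  have hintAll : IntegrableOn (fun t => Real.exp (α*t)) (Icc a b) volume :=
    (expc α).integrableOn_Icc
  have hGc : Continuous fun v => Fi α a v :=
    intervalIntegral.continuous_primitive (fun p q => (expc α).intervalIntegrable p q) a
  have hGa : Fi α a a = 0 := intervalIntegral.integral_same
  have hQM : νQ ≤ M := by linarith
  obtain ⟨x, hxI, hGx⟩ := intermediate_value_Icc hab hGc.continuousOn
    (show νQ ∈ Icc (Fi α a a) (Fi α a b) from by rw [hGa]; exact ⟨hQ.le, hQM⟩)
  have hGx : Fi α a x = νQ := hGx
  have hHc : Continuous fun v => Fi α v b := by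
    have he : (fun v => Fi α v b) = fun v => Fi α a b - Fi α a v := by
      funext v
      have := Fi_add α a v b
      linarith
    rw [he]
    exact continuous_const.sub hGc
  have hHb : Fi α b b = 0 := intervalIntegral.integral_same
  obtain ⟨y, hyI, hHy⟩ := intermediate_value_Icc' hab hHc.continuousOn
    (show νP ∈ Icc (Fi α b b) (Fi α a b) from by rw [hHb]; exact ⟨hP.le, by linarith⟩)
  have hHy : Fi α y b = νP := hHy
  have hxy : x ≤ y := by
    by_contra hxy'
    push_neg at hxy'
    have h1 : Fi α a y < Fi α a x := Fi_lt_right hxy'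
    have h2 : Fi α a y + Fi α y b = M := Fi_add α a y b
    rw [hGx] at h1
    rw [hHy] at h2
    linarith
  have hFxy : Fi α x y = νJ := by
    have h1 : Fi α a x + Fi α x y = Fi α a y := Fi_add α a x y
    have h2 : Fi α a y + Fi α y b = M := Fi_add α a y b
    rw [hGx] at h1
    rw [hHy] at h2
    linarith
  have hPne : P.Nonempty := by
    rcases P.eq_empty_or_nonempty with h | h
    · exfalso; rw [h] at hνP; simp at hνP; rw [hνP] at hP; exact lt_irrefl _ hP
    · exact h
  have hQne : Q.Nonempty := by
    rcases Q.eq_empty_or_nonempty with h | h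
    · exfalso; rw [h] at hνQ; simp at hνQ; rw [hνQ] at hQ; exact lt_irrefl _ hQ
    · exact h
  have hbddP : BddBelow P := ⟨a, fun p hp => (hPab hp).1⟩
  have hI1a : a ≤ sInf P := le_csInf hPne (fun p hp => (hPab hp).1)
  have hI1b : sInf P ≤ b := by
    obtain ⟨p, hp⟩ := hPne
    exact le_trans (csInf_le hbddP hp) (hPab hp).2
  have hνPle : νP ≤ Fi α (sInf P) b := by
    rw [hνP, ← setIntegral_Icc_eq_Fi α (sInf P) b hI1b]
    apply setIntegral_mono_set (hintAll.mono_set (Icc_subset_Icc_left hI1a))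
      (Filter.Eventually.of_forall (fun t => Real.exp_nonneg _))
    exact Filter.Eventually.of_forall (fun p hp => ⟨csInf_le hbddP hp, (hPab hp).2⟩)
  have hyge : sInf P ≤ y := by
    by_contra hy'
    push_neg at hy'
    have := Fi_lt_left (α := α) (q := b) hy'
    rw [hHy] at this
    linarith
  have claim : ∀ δ : ℝ, 0 < δ →
      Fi α (y-ε) y - (-α) * δ * Fi α (y-ε) y ≤ νJ := by
    intro δ hδ
    obtain ⟨s, hs, hslt⟩ := exists_lt_of_csInf_lt hPne (show sInf P < sInf P + δ by linarith)
    obtain ⟨t, ht, htlt⟩ := exists_lt_of_csInf_lt hQne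
      (show sInf Q < min (sInf Q + δ) (sInf P) from lt_min (by linarith) hS)
    have hst : t < s := lt_of_lt_of_le (lt_of_lt_of_le htlt (min_le_right _ _)) (csInf_le hbddP hs)
    obtain ⟨c, hc1, hc2, hc3⟩ := gapHigh hε hcov hsep hPab hQab hs ht hst
    have hgapν : Fi α c (c+ε) ≤ νJ := by
      have hceps : c ≤ c + ε := by linarith
      have e1 : Fi α c (c+ε) = ∫ t in Ioo c (c+ε), Real.exp (α*t) := by
        unfold Fi
        rw [intervalIntegral.integral_of_le hceps, MeasureTheory.integral_Ioc_eq_integral_Ioo]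
      rw [e1, hνJ]
      apply setIntegral_mono_set (hintAll.mono_set hJab)
        (Filter.Eventually.of_forall (fun t => Real.exp_nonneg _))
      exact Filter.Eventually.of_forall hc3
    have hpos : c ≤ y - ε + δ := by
      have h1 : c + ε ≤ s := hc2
      have h2 : s < sInf P + δ := hslt
      linarith [hyge]
    set h := (y - ε + δ) - c with hh
    have hh0 : 0 ≤ h := by rw [hh]; linarith
    have e2 : Fi α (y-ε+δ) (y+δ) = Real.exp (α*h) * Fi α c (c+ε) := by
      have := Fi_shift α c (c+ε) h
      rw [show c+h = y-ε+δ by rw [hh]; ring, show c+ε+h = y+δ by rw [hh]; ring] at this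
      exact this
    have e3 : Fi α (y-ε+δ) (y+δ) = Real.exp (α*δ) * Fi α (y-ε) y := by
      have := Fi_shift α (y-ε) y δ
      rw [show y-ε+δ = y-ε+δ from rfl, show y+δ = y+δ from rfl] at this
      exact this
    have hFc0 : 0 ≤ Fi α c (c+ε) := Fi_nonneg (by linarith)
    have hexp1 : Real.exp (α*h) ≤ 1 := Real.exp_le_one_iff.2 (by
      apply mul_nonpos_of_nonpos_of_nonneg hα hh0)
    have step1 : Real.exp (α*δ) * Fi α (y-ε) y ≤ νJ := by
      nlinarith [hgapν, e2, e3]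
    have hexp2 : 1 + α*δ ≤ Real.exp (α*δ) := by
      have := Real.add_one_le_exp (α*δ)
      linarith
    have hFy0 : 0 ≤ Fi α (y-ε) y := Fi_nonneg (by linarith)
    nlinarith [step1]
  have hkey : Fi α (y-ε) y ≤ νJ := by
    apply le_of_forall_pos_le_add
    intro η hη
    have hFy0 : 0 ≤ Fi α (y-ε) y := Fi_nonneg (by linarith)
    set K := (-α) * Fi α (y-ε) y with hK
    have hK0 : 0 ≤ K := mul_nonneg (by linarith) hFy0
    have hδpos : 0 < η / (K + 1) := div_pos hη (by linarith)
    have := claim (η / (K + 1)) hδpos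
    have hsmall : (-α) * (η / (K + 1)) * Fi α (y-ε) y ≤ η := by
      rw [show (-α) * (η / (K + 1)) * Fi α (y-ε) y = K * η / (K+1) by rw [hK]; ring]
      rw [div_le_iff₀ (by linarith : (0:ℝ) < K + 1)]
      nlinarith
    linarith
  have hxεy : x + ε ≤ y := by
    by_contra hy'
    push_neg at hy'
    have := Fi_lt_left (α := α) (q := y) (show y - ε < x by linarith)
    rw [hFxy] at this
    linarith
  exact ⟨x, y, hxI.1, hxεy, hyI.2, hGx, hHy, le_of_eq hFxy⟩

set_option maxHeartbeats 1000000 in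
lemma step1 {α a b ε : ℝ} (hε : 0 < ε) (hab : a ≤ b)
    {J₁ J₂ J₃ : Set ℝ}
    (hm₁ : MeasurableSet J₁) (hm₂ : MeasurableSet J₂) (hm₃ : MeasurableSet J₃)
    (hd₁₂ : Disjoint J₁ J₂) (hd₂₃ : Disjoint J₂ J₃) (hd₁₃ : Disjoint J₁ J₃)
    (hcover : J₁ ∪ J₂ ∪ J₃ = Icc a b)
    (hsep : ∀ s ∈ J₁, ∀ t ∈ J₃, ε ≤ |s - t|)
    (hA : 0 < ∫ t in J₁, Real.exp (α*t)) (hC : 0 < ∫ t in J₃, Real.exp (α*t)) :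
    ∃ x y, a ≤ x ∧ x + ε ≤ y ∧ y ≤ b ∧
      Fi α a x * Fi α y b = (∫ t in J₁, Real.exp (α*t)) * (∫ t in J₃, Real.exp (α*t)) ∧
      Fi α x y ≤ (∫ t in J₂, Real.exp (α*t)) := by
  have hJ₁ab : J₁ ⊆ Icc a b := by
    rw [← hcover]; exact subset_union_left.trans subset_union_left
  have hJ₂ab : J₂ ⊆ Icc a b := by
    rw [← hcover]; exact subset_union_right.trans subset_union_left
  have hJ₃ab : J₃ ⊆ Icc a b := by
    rw [← hcover]; exact subset_union_right
  have hcov : ∀ r ∈ Icc a b, r ∉ J₁ → r ∉ J₃ → r ∈ J₂ := by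
    intro r hr h1 h3
    rw [← hcover] at hr
    rcases hr with (h | h) | h
    · exact absurd h h1
    · exact h
    · exact absurd h h3
  have hcov' : ∀ r ∈ Icc a b, r ∉ J₃ → r ∉ J₁ → r ∈ J₂ := fun r hr h3 h1 => hcov r hr h1 h3
  have hsep' : ∀ s ∈ J₃, ∀ t ∈ J₁, ε ≤ |s - t| := by
    intro s hs t ht
    rw [abs_sub_comm]
    exact hsep t ht s hs
  have hintAll : IntegrableOn (fun t => Real.exp (α*t)) (Icc a b) volume :=
    (expc α).integrableOn_Icc
  have hint1 : IntegrableOn (fun t => Real.exp (α*t)) J₁ volume := hintAll.mono_set hJ₁ab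
  have hint2 : IntegrableOn (fun t => Real.exp (α*t)) J₂ volume := hintAll.mono_set hJ₂ab
  have hint3 : IntegrableOn (fun t => Real.exp (α*t)) J₃ volume := hintAll.mono_set hJ₃ab
  have hsum : (∫ t in J₁, Real.exp (α*t)) + (∫ t in J₂, Real.exp (α*t))
      + (∫ t in J₃, Real.exp (α*t)) = Fi α a b := by
    have h12 : ∫ t in J₁ ∪ J₂, Real.exp (α*t)
        = (∫ t in J₁, Real.exp (α*t)) + (∫ t in J₂, Real.exp (α*t)) :=
      setIntegral_union hd₁₂ hm₂ hint1 hint2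
    have hu : ∫ t in (J₁ ∪ J₂) ∪ J₃, Real.exp (α*t)
        = (∫ t in J₁ ∪ J₂, Real.exp (α*t)) + (∫ t in J₃, Real.exp (α*t)) :=
      setIntegral_union (Disjoint.union_left hd₁₃ hd₂₃) hm₃
        (hintAll.mono_set (union_subset hJ₁ab hJ₂ab)) hint3
    rw [hcover] at hu
    rw [setIntegral_Icc_eq_Fi α a b hab] at hu
    rw [h12] at hu
    linarith
  -- nonemptiness
  have hne₁ : J₁.Nonempty := by
    rcases J₁.eq_empty_or_nonempty with h | h
    · exfalso; rw [h] at hA; simp at hA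
    · exact h
  have hne₃ : J₃.Nonempty := by
    rcases J₃.eq_empty_or_nonempty with h | h
    · exfalso; rw [h] at hC; simp at hC
    · exact h
  have hbdd₁a : BddAbove J₁ := ⟨b, fun p hp => (hJ₁ab hp).2⟩
  have hbdd₃a : BddAbove J₃ := ⟨b, fun p hp => (hJ₃ab hp).2⟩
  have hbdd₁b : BddBelow J₁ := ⟨a, fun p hp => (hJ₁ab hp).1⟩
  have hbdd₃b : BddBelow J₃ := ⟨a, fun p hp => (hJ₃ab hp).1⟩
  have hsupsep : ε ≤ |sSup J₁ - sSup J₃| := by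
    apply le_of_forall_pos_le_add
    intro η hη
    obtain ⟨s, hs, hslt⟩ := exists_lt_of_lt_csSup hne₁ (show sSup J₁ - η/2 < sSup J₁ by linarith)
    obtain ⟨t, ht, htlt⟩ := exists_lt_of_lt_csSup hne₃ (show sSup J₃ - η/2 < sSup J₃ by linarith)
    have h1 : s ≤ sSup J₁ := le_csSup hbdd₁a hs
    have h2 : t ≤ sSup J₃ := le_csSup hbdd₃a ht
    have := hsep s hs t ht
    rcases abs_cases (s - t) with ⟨e1, _⟩ | ⟨e1, _⟩ <;>
      rcases abs_cases (sSup J₁ - sSup J₃) with ⟨e2, _⟩ | ⟨e2, _⟩ <;> linarith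
  have hinfsep : ε ≤ |sInf J₁ - sInf J₃| := by
    apply le_of_forall_pos_le_add
    intro η hη
    obtain ⟨s, hs, hslt⟩ := exists_lt_of_csInf_lt hne₁ (show sInf J₁ < sInf J₁ + η/2 by linarith)
    obtain ⟨t, ht, htlt⟩ := exists_lt_of_csInf_lt hne₃ (show sInf J₃ < sInf J₃ + η/2 by linarith)
    have h1 : sInf J₁ ≤ s := csInf_le hbdd₁b hs
    have h2 : sInf J₃ ≤ t := csInf_le hbdd₃b ht
    have := hsep s hs t ht
    rcases abs_cases (s - t) with ⟨e1, _⟩ | ⟨e1, _⟩ <;>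
      rcases abs_cases (sInf J₁ - sInf J₃) with ⟨e2, _⟩ | ⟨e2, _⟩ <;> linarith
  rcases le_or_gt 0 α with hα | hα
  · -- α ≥ 0 : use sSup comparison
    have hne : sSup J₁ ≠ sSup J₃ := by
      intro h
      rw [h, sub_self, abs_zero] at hsupsep
      linarith
    rcases lt_or_gt_of_ne hne with hlt | hlt
    · obtain ⟨x, y, h1, h2, h3, h4, h5, h6⟩ :=
        supcase hε hab hα hm₁ hm₃ hm₂ hcov hsep hJ₁ab hJ₃ab hJ₂ab hsum hA hC hlt
      exact ⟨x, y, h1, h2, h3, by rw [h4, h5], h6⟩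
    · have hsum' : (∫ t in J₃, Real.exp (α*t)) + (∫ t in J₂, Real.exp (α*t))
          + (∫ t in J₁, Real.exp (α*t)) = Fi α a b := by linarith
      obtain ⟨x, y, h1, h2, h3, h4, h5, h6⟩ :=
        supcase hε hab hα hm₃ hm₁ hm₂ hcov' hsep' hJ₃ab hJ₁ab hJ₂ab hsum' hC hA hlt
      exact ⟨x, y, h1, h2, h3, by rw [h4, h5]; ring, h6⟩
  · -- α < 0 : use sInf comparison
    have hne : sInf J₁ ≠ sInf J₃ := by
      intro h
      rw [h, sub_self, abs_zero] at hinfsep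
      linarith
    rcases lt_or_gt_of_ne hne with hlt | hlt
    · -- sInf J₁ < sInf J₃ : P := J₃ (higher inf), Q := J₁
      have hsum' : (∫ t in J₃, Real.exp (α*t)) + (∫ t in J₂, Real.exp (α*t))
          + (∫ t in J₁, Real.exp (α*t)) = Fi α a b := by linarith
      obtain ⟨x, y, h1, h2, h3, h4, h5, h6⟩ :=
        infcase hε hab hα.le hm₃ hm₁ hm₂ hcov' hsep' hJ₃ab hJ₁ab hJ₂ab hsum' hC hA hlt
      exact ⟨x, y, h1, h2, h3, by rw [h4, h5], h6⟩
    · -- sInf J₃ < sInf J₁ : P := J₁, Q := J₃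
      obtain ⟨x, y, h1, h2, h3, h4, h5, h6⟩ :=
        infcase hε hab hα.le hm₁ hm₃ hm₂ hcov hsep hJ₁ab hJ₃ab hJ₂ab hsum hA hC hlt
      exact ⟨x, y, h1, h2, h3, by rw [h4, h5]; ring, h6⟩


set_option maxHeartbeats 1000000 in
/-- One-dimensional isoperimetric inequality for exponential needles (KLS): for a
measurable partition `J₁ ∪ J₂ ∪ J₃ = [a,b]` with `dist(J₁,J₃) ≥ ε` and the measure
`e^{αt} dt`, `(m/(ε log 2))·μ([a,b])·μ(J₂) ≥ μ(J₁)·μ(J₃)`. -/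
theorem stmt_10 (a b : ℝ) (hab : a ≤ b) (ε : ℝ) (hε : 0 < ε) (α : ℝ)
    (J₁ J₂ J₃ : Set ℝ)
    (hm₁ : MeasurableSet J₁) (hm₂ : MeasurableSet J₂) (hm₃ : MeasurableSet J₃)
    (hd₁₂ : Disjoint J₁ J₂) (hd₂₃ : Disjoint J₂ J₃) (hd₁₃ : Disjoint J₁ J₃)
    (hcover : J₁ ∪ J₂ ∪ J₃ = Set.Icc a b)
    (hsep : ∀ s ∈ J₁, ∀ t ∈ J₃, ε ≤ |s - t|)
    (u : ℝ) (hu : u ∈ Set.Icc a b)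
    (M m : ℝ)
    (hM : M = ∫ t in Set.Icc a b, Real.exp (α * t))
    (hm : m = (1 / M) * ∫ t in Set.Icc a b, |t - u| * Real.exp (α * t)) :
    (m / (ε * Real.log 2)) * M * (∫ t in J₂, Real.exp (α * t)) ≥
      (∫ t in J₁, Real.exp (α * t)) * (∫ t in J₃, Real.exp (α * t)) := by
  have hεlog : 0 < ε * Real.log 2 := mul_pos hε (Real.log_pos one_lt_two)
  set A' := ∫ t in J₁, Real.exp (α * t) with hA'
  set B' := ∫ t in J₂, Real.exp (α * t) with hB'
  set C' := ∫ t in J₃, Real.exp (α * t) with hC'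
  have hA'0 : 0 ≤ A' := setIntegral_nonneg hm₁ (fun t _ => Real.exp_nonneg _)
  have hB'0 : 0 ≤ B' := setIntegral_nonneg hm₂ (fun t _ => Real.exp_nonneg _)
  have hC'0 : 0 ≤ C' := setIntegral_nonneg hm₃ (fun t _ => Real.exp_nonneg _)
  rcases eq_or_lt_of_le hab with heq | hab'
  · -- degenerate a = b
    subst heq
    have hnull : volume (Icc a a) = 0 := by
      rw [Real.volume_Icc, sub_self]
      simp
    have hMz : M = 0 := by
      rw [hM, Measure.restrict_eq_zero.2 hnull, integral_zero_measure]
    have hsub : J₁ ⊆ Icc a a := by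
      rw [← hcover]; exact subset_union_left.trans subset_union_left
    have hAz : A' = 0 := by
      rw [hA', Measure.restrict_eq_zero.2 (measure_mono_null hsub hnull), integral_zero_measure]
    rw [ge_iff_le, hMz, hAz]
    simp
  · -- a < b
    have hW0 : 0 ≤ ∫ t in Set.Icc a b, |t - u| * Real.exp (α * t) :=
      setIntegral_nonneg measurableSet_Icc
        (fun t _ => mul_nonneg (abs_nonneg _) (Real.exp_nonneg _))
    have hM0 : 0 < M := by
      rw [hM, setIntegral_Icc_eq_Fi α a b hab]
      exact Fi_pos hab'
    have hm0 : 0 ≤ m := by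
      rw [hm]
      exact mul_nonneg (by positivity) hW0
    by_cases hApos : 0 < A'
    · by_cases hCpos : 0 < C'
      · -- main case
        obtain ⟨x, y, h1, h2, h3, h4, h5⟩ :=
          step1 hε hab hm₁ hm₂ hm₃ hd₁₂ hd₂₃ hd₁₃ hcover hsep hApos hCpos
        have hs2 := step2 (α := α) hε h1 h2 h3 hu.1 hu.2
        have hWeq : Wfun α a b u = ∫ t in Set.Icc a b, |t - u| * Real.exp (α * t) := rfl
        rw [hWeq, h4] at hs2
        have hchain : ε * Real.log 2 * (A' * C')
            ≤ B' * ∫ t in Set.Icc a b, |t - u| * Real.exp (α * t) := by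
          have hstep : Fi α x y * (∫ t in Set.Icc a b, |t - u| * Real.exp (α * t))
              ≤ B' * ∫ t in Set.Icc a b, |t - u| * Real.exp (α * t) :=
            mul_le_mul_of_nonneg_right h5 hW0
          linarith
        rw [ge_iff_le, hm]
        have heq2 : (1 / M) * (∫ t in Set.Icc a b, |t - u| * Real.exp (α * t)) / (ε * Real.log 2) * M * B'
            = (∫ t in Set.Icc a b, |t - u| * Real.exp (α * t)) * B' / (ε * Real.log 2) := by
          generalize (∫ t in Set.Icc a b, |t - u| * Real.exp (α * t)) = W
          field_simp
        rw [heq2, le_div_iff₀ hεlog]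
        nlinarith [hchain]
      · -- C' = 0
        have hCz : C' = 0 := le_antisymm (not_lt.1 hCpos) hC'0
        rw [ge_iff_le, hCz, mul_zero]
        have : 0 ≤ m / (ε * Real.log 2) * M * B' := by positivity
        linarith
    · -- A' = 0
      have hAz : A' = 0 := le_antisymm (not_lt.1 hApos) hA'0
      rw [ge_iff_le, hAz, zero_mul]
      have : 0 ≤ m / (ε * Real.log 2) * M * B' := by positivity
      linarith
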